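/- (Lemma 3.1) Let (X, d, μ) be an upper doubling, geometrically doubling metric measure space, r ∈ (0,1), and M♯_r(f) := [M♯(|f|^r)]^{1/r}, where M♯ is the sharp maximal function. If f ∈ RBMO(μ), then M♯_r(f) ∈ L^∞(μ) and ‖M♯_r(f)‖_{L^∞(μ)} ≤ C ‖f‖_{RBMO(μ)}. -/

import Mathlib

open Metric MeasureTheory
open scoped ENNReal

/-- Tolsa-Hytönen coefficient `δ(B, S)` of two balls `B ⊆ S`. -/
noncomputable def delta {X : Type*} [MetricSpace X] [MeasurableSpace X]
    (μ : Measure X) (Λ : X → ℝ → ℝ) (cB : X) (rB : ℝ) (cS : X) (rS : ℝ) : ℝ :=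
  (∫⁻ x in ball cS (2 * rS) \ ball cB rB,
      ENNReal.ofReal ((Λ cB (dist x cB))⁻¹) ∂μ).toReal

open scoped Classical in
/-- The exponent of the smallest `(6, β₆)`-doubling dilate `6^j B` of the ball `B(c, r)`. -/
noncomputable def tilde6 {X : Type*} [MetricSpace X] [MeasurableSpace X]
    (μ : Measure X) (β₆ : ℝ) (c : X) (r : ℝ) : ℕ :=
  if h : ∃ j : ℕ, μ (ball c (6 ^ (j + 1) * r)) ≤ ENNReal.ofReal β₆ * μ (ball c (6 ^ j * r))
  then Nat.find h else 0

/-- The sharp maximal function `M♯(f)` on a non-homogeneous metric measure space. -/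
noncomputable def msharp {X : Type*} [MetricSpace X] [MeasurableSpace X]
    (μ : Measure X) (Λ : X → ℝ → ℝ) (β₆ : ℝ) (f : X → ℝ) (x : X) : ℝ≥0∞ :=
  (⨆ (c : X) (r : ℝ) (_ : 0 < r ∧ x ∈ ball c r),
    ENNReal.ofReal ((∫ y in ball c r,
        |f y - ⨍ z in ball c (6 ^ tilde6 μ β₆ c r * r), f z ∂μ| ∂μ) /
      (μ (ball c (5 * r))).toReal)) ⊔
  (⨆ (cB : X) (rB : ℝ) (cS : X) (rS : ℝ)
      (_ : 0 < rB ∧ 0 < rS ∧ x ∈ ball cB rB ∧ ball cB rB ⊆ ball cS rS ∧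
        μ (ball cB (6 * rB)) ≤ ENNReal.ofReal β₆ * μ (ball cB rB) ∧
        μ (ball cS (6 * rS)) ≤ ENNReal.ofReal β₆ * μ (ball cS rS)),
    ENNReal.ofReal (|(⨍ z in ball cB rB, f z ∂μ) - ⨍ z in ball cS rS, f z ∂μ| /
      (1 + delta μ Λ cB rB cS rS)))

lemma aux_rpow_sub {r : ℝ} (hr0 : 0 < r) (hr1 : r ≤ 1) {u v : ℝ} (hu : 0 ≤ u) (hv : 0 ≤ v)
    (huv : v ≤ u) : u ^ r - v ^ r ≤ (u - v) ^ r := by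
  have h := NNReal.rpow_add_le_add_rpow ((u - v).toNNReal) (v.toNNReal) hr0.le hr1
  have hsum : (u - v).toNNReal + v.toNNReal = u.toNNReal := by
    ext
    simp only [NNReal.coe_add, Real.coe_toNNReal _ (by linarith : (0:ℝ) ≤ u - v),
      Real.coe_toNNReal _ hv, Real.coe_toNNReal _ hu]
    ring
  rw [hsum] at h
  have := NNReal.coe_le_coe.2 h
  push_cast [NNReal.coe_rpow, Real.coe_toNNReal _ (by linarith : (0:ℝ) ≤ u - v),
    Real.coe_toNNReal _ hu, Real.coe_toNNReal _ hv] at this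
  linarith

lemma aux_abs_rpow_sub {r : ℝ} (hr0 : 0 < r) (hr1 : r ≤ 1) (s t : ℝ) :
    abs (|s| ^ r - |t| ^ r) ≤ |s - t| ^ r := by
  have key : ∀ u v : ℝ, 0 ≤ u → 0 ≤ v → v ≤ u → |u ^ r - v ^ r| ≤ |u - v| ^ r := by
    intro u v hu hv huv
    rw [abs_of_nonneg (by linarith : (0:ℝ) ≤ u - v),
      abs_of_nonneg (sub_nonneg.2 (Real.rpow_le_rpow hv huv hr0.le))]
    exact aux_rpow_sub hr0 hr1 hu hv huv
  have habs : abs (|s| - |t|) ≤ |s - t| := abs_abs_sub_abs_le_abs_sub s t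
  rcases le_total |t| |s| with h | h
  · calc abs (|s| ^ r - |t| ^ r) ≤ abs (|s| - |t|) ^ r := key _ _ (abs_nonneg s) (abs_nonneg t) h
      _ ≤ |s - t| ^ r := Real.rpow_le_rpow (abs_nonneg _) habs hr0.le
  · rw [abs_sub_comm]
    calc abs (|t| ^ r - |s| ^ r) ≤ abs (|t| - |s|) ^ r := key _ _ (abs_nonneg t) (abs_nonneg s) h
      _ ≤ |s - t| ^ r := by
          rw [abs_sub_comm |t| _]
          exact Real.rpow_le_rpow (abs_nonneg _) habs hr0.le

lemma aux_rpow_integrable {X : Type*} [MeasurableSpace X] {μ : Measure X} {s : Set X}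
    (hfin : μ s ≠ ∞) {h : X → ℝ} (hnn : ∀ x, 0 ≤ h x) (hint : IntegrableOn h s μ)
    {r : ℝ} (hr0 : 0 < r) (hr1 : r ≤ 1) : IntegrableOn (fun z => h z ^ r) s μ := by
  have hms : AEStronglyMeasurable (fun z => h z ^ r) (μ.restrict s) :=
    (Real.continuous_rpow_const hr0.le).comp_aestronglyMeasurable hint.aestronglyMeasurable
  have hbound : IntegrableOn (fun z => 1 + h z) s μ :=
    (integrableOn_const hfin).add hint
  refine Integrable.mono' hbound hms (Filter.Eventually.of_forall fun z => ?_)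
  rw [Real.norm_eq_abs, abs_of_nonneg (Real.rpow_nonneg (hnn z) r)]
  rcases le_total (h z) 1 with hz | hz
  · have : h z ^ r ≤ 1 := Real.rpow_le_one (hnn z) hz hr0.le
    linarith [hnn z]
  · have : h z ^ r ≤ h z ^ (1:ℝ) := Real.rpow_le_rpow_of_exponent_le hz hr1
    rw [Real.rpow_one] at this; linarith

lemma aux_jensen {X : Type*} [MeasurableSpace X] {μ : Measure X} {s : Set X}
    (h0 : μ s ≠ 0) (hfin : μ s ≠ ∞) {h : X → ℝ} (hnn : ∀ x, 0 ≤ h x)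
    (hint : IntegrableOn h s μ) {r : ℝ} (hr0 : 0 < r) (hr1 : r ≤ 1) :
    ⨍ z in s, h z ^ r ∂μ ≤ (⨍ z in s, h z ∂μ) ^ r := by
  have := ConcaveOn.le_map_set_average (μ := μ) (t := s)
    (Real.concaveOn_rpow hr0.le hr1)
    ((Real.continuous_rpow_const hr0.le).continuousOn) isClosed_Ici h0 hfin
    (Filter.Eventually.of_forall fun z => Set.mem_Ici.2 (hnn z)) hint
    (aux_rpow_integrable hfin hnn hint hr0 hr1)
  exact this

lemma aux_avg_dev {X : Type*} [MeasurableSpace X] {μ : Measure X} {s : Set X}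
    (h0 : μ s ≠ 0) (hfin : μ s ≠ ∞) {f : X → ℝ} (hint : IntegrableOn f s μ) (a : ℝ)
    {r : ℝ} (hr0 : 0 < r) (hr1 : r ≤ 1) :
    |(⨍ z in s, |f z| ^ r ∂μ) - |a| ^ r| ≤ (⨍ z in s, |f z - a| ∂μ) ^ r := by
  have hconst : IntegrableOn (fun _ : X => a) s μ := integrableOn_const hfin
  have hfa : IntegrableOn (fun z => |f z - a|) s μ := (hint.sub hconst).abs
  have h1 : IntegrableOn (fun z => |f z| ^ r) s μ :=
    aux_rpow_integrable hfin (fun _ => abs_nonneg _) hint.abs hr0 hr1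
  have h2 : IntegrableOn (fun z => |f z - a| ^ r) s μ :=
    aux_rpow_integrable hfin (fun _ => abs_nonneg _) hfa hr0 hr1
  have hμpos : 0 < (μ s).toReal := ENNReal.toReal_pos h0 hfin
  set m : ℝ := ((μ s).toReal)⁻¹ with hm_def
  have hm : 0 ≤ m := inv_nonneg.2 hμpos.le
  have hmμ : m * (μ s).toReal = 1 := inv_mul_cancel₀ hμpos.ne'
  have hconst2 : IntegrableOn (fun _ : X => |a| ^ r) s μ :=
    integrableOn_const hfin
  have key : (⨍ z in s, |f z| ^ r ∂μ) - |a| ^ r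
      = m * ∫ z in s, (|f z| ^ r - |a| ^ r) ∂μ := by
    rw [integral_sub h1 hconst2, setIntegral_const, smul_eq_mul, setAverage_eq,
      smul_eq_mul, mul_sub, ← mul_assoc, Measure.real, hmμ, one_mul]
  calc |(⨍ z in s, |f z| ^ r ∂μ) - |a| ^ r|
      = m * |∫ z in s, (|f z| ^ r - |a| ^ r) ∂μ| := by
        rw [key, abs_mul, abs_of_nonneg hm]
    _ ≤ m * ∫ z in s, |(|f z| ^ r - |a| ^ r)| ∂μ := by
        refine mul_le_mul_of_nonneg_left ?_ hm
        simpa [Real.norm_eq_abs] using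
          norm_integral_le_integral_norm (fun z => |f z| ^ r - |a| ^ r) (μ := μ.restrict s)
    _ ≤ m * ∫ z in s, |f z - a| ^ r ∂μ := by
        refine mul_le_mul_of_nonneg_left (integral_mono (h1.sub hconst2).abs h2 fun z => ?_) hm
        exact aux_abs_rpow_sub hr0 hr1 (f z) a
    _ = ⨍ z in s, |f z - a| ^ r ∂μ := by rw [setAverage_eq, smul_eq_mul, Measure.real]
    _ ≤ (⨍ z in s, |f z - a| ∂μ) ^ r :=
        aux_jensen h0 hfin (fun _ => abs_nonneg _) hfa hr0 hr1

section lam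
variable {X : Type*} [MetricSpace X] [MeasurableSpace X] {Λ : X → ℝ → ℝ} {Cl : ℝ}

lemma aux_lambda_two (hΛdouble : ∀ (x : X) (r : ℝ), 0 < r → Λ x r ≤ Cl * Λ x (r / 2))
    (hCl0 : 0 < Cl) (c : X) {s : ℝ} (hs : 0 < s) :
    ∀ k : ℕ, Λ c (2 ^ k * s) ≤ Cl ^ k * Λ c s := by
  intro k
  induction k with
  | zero => simp
  | succ k ih =>
    have h2 : (0:ℝ) < 2 ^ (k+1) * s := by positivity
    have := hΛdouble c (2 ^ (k+1) * s) h2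
    have heq : (2:ℝ) ^ (k+1) * s / 2 = 2 ^ k * s := by ring
    rw [heq] at this
    calc Λ c (2 ^ (k+1) * s) ≤ Cl * Λ c (2 ^ k * s) := this
      _ ≤ Cl * (Cl ^ k * Λ c s) := by
          exact mul_le_mul_of_nonneg_left ih hCl0.le
      _ = Cl ^ (k+1) * Λ c s := by ring

lemma aux_lambda_six (hΛpos : ∀ (x : X) (r : ℝ), 0 < r → 0 < Λ x r)
    (hΛmono : ∀ (x : X) (r s : ℝ), 0 < r → r ≤ s → Λ x r ≤ Λ x s)
    (hΛdouble : ∀ (x : X) (r : ℝ), 0 < r → Λ x r ≤ Cl * Λ x (r / 2))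
    (hCl1 : 1 ≤ Cl) (c : X) {s : ℝ} (hs : 0 < s) (m : ℕ) :
    Λ c (6 ^ m * s) ≤ Cl * (Cl ^ Real.logb 2 6) ^ m * Λ c s := by
  have hCl0 : (0:ℝ) < Cl := lt_of_lt_of_le one_pos hCl1
  set k : ℕ := ⌈Real.logb 2 6 * m⌉₊ with hk_def
  have hlogb : (0:ℝ) ≤ Real.logb 2 6 := Real.logb_nonneg (by norm_num) (by norm_num)
  have hle : Real.logb 2 6 * m ≤ (k:ℝ) := Nat.le_ceil _
  have h6 : (6:ℝ) ^ m ≤ 2 ^ k := by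
    have h2 : ((2:ℝ) ^ Real.logb 2 6) = 6 :=
      Real.rpow_logb (by norm_num) (by norm_num) (by norm_num)
    calc (6:ℝ) ^ m = ((2:ℝ) ^ Real.logb 2 6) ^ m := by rw [h2]
      _ = (2:ℝ) ^ (Real.logb 2 6 * (m:ℝ)) := (Real.rpow_mul_natCast (by norm_num) _ _).symm
      _ ≤ (2:ℝ) ^ ((k:ℕ):ℝ) := Real.rpow_le_rpow_of_exponent_le (by norm_num) hle
      _ = 2 ^ k := Real.rpow_natCast 2 k
  have hmono := hΛmono c (6 ^ m * s) (2 ^ k * s) (by positivity)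
    (mul_le_mul_of_nonneg_right h6 hs.le)
  have htwo := aux_lambda_two hΛdouble hCl0 c hs k
  have hklt : (k:ℝ) ≤ Real.logb 2 6 * m + 1 := by
    have := Nat.ceil_lt_add_one (by positivity : (0:ℝ) ≤ Real.logb 2 6 * m)
    exact_mod_cast this.le
  have hClk : Cl ^ k ≤ Cl * (Cl ^ Real.logb 2 6) ^ m := by
    calc Cl ^ k = Cl ^ ((k:ℕ):ℝ) := (Real.rpow_natCast Cl k).symm
      _ ≤ Cl ^ (Real.logb 2 6 * m + 1) := Real.rpow_le_rpow_of_exponent_le hCl1 hklt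
      _ = Cl ^ (Real.logb 2 6 * (m:ℝ)) * Cl := by
          rw [Real.rpow_add hCl0, Real.rpow_one]
      _ = Cl * (Cl ^ Real.logb 2 6) ^ m := by
          rw [Real.rpow_mul_natCast hCl0.le, mul_comm]
  have hΛs : 0 < Λ c s := hΛpos c s hs
  calc Λ c (6 ^ m * s) ≤ Λ c (2 ^ k * s) := hmono
    _ ≤ Cl ^ k * Λ c s := htwo
    _ ≤ Cl * (Cl ^ Real.logb 2 6) ^ m * Λ c s :=
        mul_le_mul_of_nonneg_right hClk hΛs.le

end lam

section exist
variable {X : Type*} [MetricSpace X] [MeasurableSpace X] {μ : Measure X}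
  {Λ : X → ℝ → ℝ} {Cl β₆ : ℝ}

lemma aux_exists_doubling
    (hΛpos : ∀ (x : X) (r : ℝ), 0 < r → 0 < Λ x r)
    (hΛmono : ∀ (x : X) (r s : ℝ), 0 < r → r ≤ s → Λ x r ≤ Λ x s)
    (hΛdom : ∀ (x : X) (r : ℝ), 0 < r → μ (ball x r) ≤ ENNReal.ofReal (Λ x r))
    (hΛdouble : ∀ (x : X) (r : ℝ), 0 < r → Λ x r ≤ Cl * Λ x (r / 2))
    (hball : ∀ (x : X) (r : ℝ), 0 < r → 0 < μ (ball x r) ∧ μ (ball x r) < ⊤)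
    (hCl1 : 1 ≤ Cl) (hβ₆ : Cl ^ Real.logb 2 6 < β₆) (c : X) {ρ : ℝ} (hρ : 0 < ρ) :
    ∃ j : ℕ, μ (ball c (6 ^ (j + 1) * ρ)) ≤ ENNReal.ofReal β₆ * μ (ball c (6 ^ j * ρ)) := by
  by_contra hcon
  push_neg at hcon
  set t : ℝ := Cl ^ Real.logb 2 6 with ht_def
  have hCl0 : (0:ℝ) < Cl := lt_of_lt_of_le one_pos hCl1
  have ht1 : (1:ℝ) ≤ t := Real.one_le_rpow hCl1
    (Real.logb_nonneg (by norm_num) (by norm_num))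
  have ht0 : (0:ℝ) < t := lt_of_lt_of_le one_pos ht1
  have hβ0 : (0:ℝ) < β₆ := lt_trans ht0 hβ₆
  set a : ℕ → ℝ := fun j => (μ (ball c (6 ^ j * ρ))).toReal with ha_def
  have hapos : ∀ j, 0 < a j := fun j =>
    ENNReal.toReal_pos (hball c _ (by positivity)).1.ne' (hball c _ (by positivity)).2.ne
  have hstep : ∀ j, β₆ * a j ≤ a (j + 1) := by
    intro j
    have h := hcon j
    have hfin : μ (ball c (6 ^ (j+1) * ρ)) ≠ ⊤ := (hball c _ (by positivity)).2.ne
    have := (ENNReal.toReal_lt_toReal (by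
        exact ENNReal.mul_ne_top ENNReal.ofReal_ne_top (hball c _ (by positivity)).2.ne)
      hfin).2 h
    rw [ENNReal.toReal_mul, ENNReal.toReal_ofReal hβ0.le] at this
    exact this.le
  have hchain : ∀ j, β₆ ^ j * a 0 ≤ a j := by
    intro j
    induction j with
    | zero => simp
    | succ j ih =>
      calc β₆ ^ (j+1) * a 0 = β₆ * (β₆ ^ j * a 0) := by ring
        _ ≤ β₆ * a j := mul_le_mul_of_nonneg_left ih hβ0.le
        _ ≤ a (j + 1) := hstep j
  have hup : ∀ j, a j ≤ Cl * t ^ j * Λ c ρ := by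
    intro j
    have h1 : μ (ball c (6 ^ j * ρ)) ≤ ENNReal.ofReal (Λ c (6 ^ j * ρ)) :=
      hΛdom c _ (by positivity)
    have h2 : a j ≤ Λ c (6 ^ j * ρ) := by
      refine ENNReal.toReal_le_of_le_ofReal ?_ h1
      exact (hΛpos c _ (by positivity)).le
    exact h2.trans (aux_lambda_six hΛpos hΛmono hΛdouble hCl1 c hρ j)
  -- contradiction via unboundedness of (β₆/t)^j
  have hq1 : 1 < β₆ / t := (one_lt_div ht0).2 hβ₆
  obtain ⟨j, hj⟩ := pow_unbounded_of_one_lt (Cl * Λ c ρ / a 0) hq1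
  have h1 : β₆ ^ j * a 0 ≤ Cl * t ^ j * Λ c ρ := (hchain j).trans (hup j)
  have h2 : Cl * t ^ j * Λ c ρ < β₆ ^ j * a 0 := by
    have hj' : Cl * Λ c ρ < (β₆ / t) ^ j * a 0 := (div_lt_iff₀ (hapos 0)).1 hj
    rw [div_pow] at hj'
    have hj'' : Cl * Λ c ρ < β₆ ^ j * a 0 / t ^ j := by
      rw [div_mul_eq_mul_div] at hj'
      linarith [hj']
    have := (lt_div_iff₀ (by positivity : (0:ℝ) < t ^ j)).1 hj''
    linarith
  linarith

end exist

section deltabd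
variable {X : Type*} [MetricSpace X] [MeasurableSpace X] [BorelSpace X] {μ : Measure X}
  {Λ : X → ℝ → ℝ} {Cl β₆ : ℝ}

lemma aux_geom_sum {q : ℝ} (hq0 : 0 ≤ q) (hq1 : q < 1) (n : ℕ) :
    ∑ i ∈ Finset.range n, q ^ i ≤ (1 - q)⁻¹ := by
  have h1 : (0:ℝ) < 1 - q := by linarith
  have hne : q ≠ 1 := ne_of_lt hq1
  rw [geom_sum_eq hne, div_le_iff_of_neg (by linarith : q - 1 < 0)]
  have h2 : (0:ℝ) ≤ q ^ n := by positivity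
  have h3 : (1-q)⁻¹ * (1-q) = 1 := inv_mul_cancel₀ h1.ne'
  nlinarith

lemma aux_delta_le
    (hΛpos : ∀ (x : X) (r : ℝ), 0 < r → 0 < Λ x r)
    (hΛmono : ∀ (x : X) (r s : ℝ), 0 < r → r ≤ s → Λ x r ≤ Λ x s)
    (hΛdom : ∀ (x : X) (r : ℝ), 0 < r → μ (ball x r) ≤ ENNReal.ofReal (Λ x r))
    (hΛdouble : ∀ (x : X) (r : ℝ), 0 < r → Λ x r ≤ Cl * Λ x (r / 2))
    (hball : ∀ (x : X) (r : ℝ), 0 < r → 0 < μ (ball x r) ∧ μ (ball x r) < ⊤)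
    (hCl1 : 1 ≤ Cl) (hβ₆ : Cl ^ Real.logb 2 6 < β₆) (c : X) {ρ : ℝ} (hρ : 0 < ρ)
    {j : ℕ}
    (hmin : ∀ i < j, ¬ μ (ball c (6 ^ (i + 1) * ρ)) ≤
      ENNReal.ofReal β₆ * μ (ball c (6 ^ i * ρ))) :
    delta μ Λ c ρ c (6 ^ j * ρ) ≤
      Cl + Cl * (Cl ^ Real.logb 2 6) * β₆ / (β₆ - Cl ^ Real.logb 2 6) := by
  set t : ℝ := Cl ^ Real.logb 2 6 with ht_def
  have hCl0 : (0:ℝ) < Cl := lt_of_lt_of_le one_pos hCl1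
  have ht1 : (1:ℝ) ≤ t := Real.one_le_rpow hCl1
    (Real.logb_nonneg (by norm_num) (by norm_num))
  have ht0 : (0:ℝ) < t := lt_of_lt_of_le one_pos ht1
  have hβ0 : (0:ℝ) < β₆ := lt_trans ht0 hβ₆
  have hβt : (0:ℝ) < β₆ - t := by linarith [hβ₆]
  have hA0 : (0:ℝ) ≤ Cl + Cl * t * β₆ / (β₆ - t) := by positivity
  set a : ℕ → ℝ := fun i => (μ (ball c (6 ^ i * ρ))).toReal with ha_def
  have hapos : ∀ i, 0 < a i := fun i =>
    ENNReal.toReal_pos (hball c _ (by positivity)).1.ne' (hball c _ (by positivity)).2.ne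
  have hΛb : ∀ i : ℕ, 0 < Λ c (6 ^ i * ρ) := fun i => hΛpos c _ (by positivity)
  -- the chain inequality from minimality
  have hstep : ∀ i < j, β₆ * a i ≤ a (i + 1) := by
    intro i hi
    have h := lt_of_not_ge (hmin i hi)
    have := (ENNReal.toReal_lt_toReal
      (ENNReal.mul_ne_top ENNReal.ofReal_ne_top (hball c _ (by positivity)).2.ne)
      (hball c _ (by positivity)).2.ne).2 h
    rw [ENNReal.toReal_mul, ENNReal.toReal_ofReal hβ0.le] at this
    exact this.le
  have hchain : ∀ m p, p + m ≤ j → β₆ ^ m * a p ≤ a (p + m) := by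
    intro m
    induction m with
    | zero => intro p _; simp
    | succ m ih =>
      intro p hpm
      have h1 : p + m < j := by omega
      calc β₆ ^ (m+1) * a p = β₆ * (β₆ ^ m * a p) := by ring
        _ ≤ β₆ * a (p + m) := mul_le_mul_of_nonneg_left (ih p h1.le) hβ0.le
        _ ≤ a (p + m + 1) := hstep _ h1
  -- domain decomposition
  set g : X → ℝ≥0∞ := fun x => ENNReal.ofReal ((Λ c (dist x c))⁻¹) with hg_def
  set S : ℕ → Set X := fun i =>
    if i < j then ball c (6 ^ (i+1) * ρ) \ ball c (6 ^ i * ρ)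
    else if i = j then ball c (2 * (6 ^ j * ρ)) \ ball c (6 ^ j * ρ)
    else ∅ with hS_def
  have hcover : ball c (2 * (6 ^ j * ρ)) \ ball c ρ ⊆ ⋃ i, S i := by
    intro x hx
    obtain ⟨hx1, hx2⟩ := hx
    rw [mem_ball] at hx1
    have hd : ρ ≤ dist x c := by
      by_contra h; exact hx2 (mem_ball.2 (by linarith))
    have hP : ∃ i : ℕ, dist x c < 6 ^ (i+1) * ρ := by
      refine ⟨j, ?_⟩
      have : (2:ℝ) * (6 ^ j * ρ) ≤ 6 ^ (j+1) * ρ := by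
        have : (6:ℝ) ^ j * ρ > 0 := by positivity
        rw [pow_succ]
        nlinarith
      linarith
    classical
    set i₁ := Nat.find hP with hi₁
    have hup := Nat.find_spec hP
    have hlow : 6 ^ i₁ * ρ ≤ dist x c := by
      rcases Nat.eq_zero_or_pos i₁ with h0 | hpos
      · rw [h0]; simpa using hd
      · have := Nat.find_min hP (Nat.sub_lt hpos one_pos)
        push_neg at this
        have heq : i₁ - 1 + 1 = i₁ := Nat.succ_pred_eq_of_pos hpos
        rwa [heq] at this
    have hi₁j : i₁ ≤ j := by
      by_contra h
      push_neg at h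
      have h6 : (6:ℝ) ^ j * ρ ≤ 6 ^ i₁ * ρ := by
        have : (6:ℝ) ^ j ≤ 6 ^ i₁ := pow_le_pow_right₀ (by norm_num) h.le
        nlinarith
      have h7 : (6:ℝ) ^ (j+1) ≤ 6 ^ i₁ := pow_le_pow_right₀ (by norm_num) h
      have h8 : (0:ℝ) < 6 ^ j * ρ := by positivity
      have h9 : (2:ℝ) * (6 ^ j * ρ) ≤ 6 ^ i₁ * ρ := by
        rw [pow_succ] at h7
        nlinarith
      linarith
    rcases lt_or_eq_of_le hi₁j with hlt | heq
    · refine Set.mem_iUnion.2 ⟨i₁, ?_⟩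
      have : S i₁ = ball c (6 ^ (i₁+1) * ρ) \ ball c (6 ^ i₁ * ρ) := by
        simp only [hS_def, if_pos hlt]
      rw [this]
      exact ⟨mem_ball.2 hup, fun hmem => absurd (mem_ball.1 hmem) (not_lt.2 hlow)⟩
    · refine Set.mem_iUnion.2 ⟨j, ?_⟩
      have hSj : S j = ball c (2 * (6 ^ j * ρ)) \ ball c (6 ^ j * ρ) := by
        simp [hS_def]
      have hlow' : 6 ^ j * ρ ≤ dist x c := by rw [← heq]; exact hlow
      rw [hSj]
      exact ⟨mem_ball.2 hx1, fun hmem => absurd (mem_ball.1 hmem) (not_lt.2 hlow')⟩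
  have hSmeas : ∀ i, MeasurableSet (S i) := by
    intro i
    simp only [hS_def]
    split_ifs
    · exact measurableSet_ball.diff measurableSet_ball
    · exact measurableSet_ball.diff measurableSet_ball
    · exact MeasurableSet.empty
  set bnd : ℕ → ℝ := fun i =>
    if i < j then Cl * t * (t / β₆) ^ (j - 1 - i) else if i = j then Cl else 0 with hbnd_def
  have hbnd0 : ∀ i, 0 ≤ bnd i := by
    intro i
    simp only [hbnd_def]
    split_ifs <;> positivity
  have hterm : ∀ i, ∫⁻ x in S i, g x ∂μ ≤ ENNReal.ofReal (bnd i) := by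
    intro i
    rcases lt_trichotomy i j with hlt | heq | hgt
    · -- i < j
      have hSi : S i = ball c (6 ^ (i + 1) * ρ) \ ball c (6 ^ i * ρ) := by
        simp only [hS_def, if_pos hlt]
      have hpt : ∀ x ∈ S i, g x ≤ ENNReal.ofReal ((Λ c (6 ^ i * ρ))⁻¹) := by
        intro x hx
        rw [hSi] at hx
        have hdist : 6 ^ i * ρ ≤ dist x c := by
          by_contra h
          exact hx.2 (mem_ball.2 (by push_neg at h; linarith))
        have hΛle : Λ c (6 ^ i * ρ) ≤ Λ c (dist x c) := hΛmono c _ _ (by positivity) hdist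
        exact ENNReal.ofReal_le_ofReal (inv_anti₀ (hΛb i) hΛle)
      calc ∫⁻ x in S i, g x ∂μ
          ≤ ∫⁻ _ in S i, ENNReal.ofReal ((Λ c (6 ^ i * ρ))⁻¹) ∂μ :=
            lintegral_mono_ae (ae_restrict_of_forall_mem (hSmeas i) hpt)
        _ = ENNReal.ofReal ((Λ c (6 ^ i * ρ))⁻¹) * μ (S i) := setLIntegral_const _ _
        _ ≤ ENNReal.ofReal ((Λ c (6 ^ i * ρ))⁻¹) * μ (ball c (6 ^ (i + 1) * ρ)) := by
            refine mul_le_mul_right (measure_mono ?_) _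
            rw [hSi]; exact Set.diff_subset
        _ = ENNReal.ofReal ((Λ c (6 ^ i * ρ))⁻¹ * a (i + 1)) := by
            rw [ENNReal.ofReal_mul (inv_nonneg.2 (hΛb i).le)]
            congr 1
            exact (ENNReal.ofReal_toReal (hball c _ (by positivity)).2.ne).symm
        _ ≤ ENNReal.ofReal (bnd i) := by
            refine ENNReal.ofReal_le_ofReal ?_
            have hbndi : bnd i = Cl * t * (t / β₆) ^ (j - 1 - i) := by
              simp only [hbnd_def, if_pos hlt]
            rw [hbndi]
            set m := j - 1 - i with hm_def
            have hmj : i + 1 + m = j := by omega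
            have hch : β₆ ^ m * a (i + 1) ≤ a j := by
              have := hchain m (i + 1) (by omega)
              rwa [hmj] at this
            have haj : a j ≤ Λ c (6 ^ j * ρ) :=
              ENNReal.toReal_le_of_le_ofReal (hΛb j).le (hΛdom c _ (by positivity))
            have hΛj : Λ c (6 ^ j * ρ) ≤ Cl * t ^ (m + 1) * Λ c (6 ^ i * ρ) := by
              have h6 := aux_lambda_six hΛpos hΛmono hΛdouble hCl1 c
                (show (0:ℝ) < 6 ^ i * ρ by positivity) (m + 1)
              have heq6 : (6:ℝ) ^ (m + 1) * (6 ^ i * ρ) = 6 ^ j * ρ := by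
                rw [← mul_assoc, ← pow_add, show m + 1 + i = j from by omega]
              rwa [heq6] at h6
            have hkey : a (i + 1) ≤ Cl * t * (t / β₆) ^ m * Λ c (6 ^ i * ρ) := by
              have h3 : Cl * t * (t / β₆) ^ m * Λ c (6 ^ i * ρ)
                  = Cl * t ^ (m + 1) * Λ c (6 ^ i * ρ) / β₆ ^ m := by
                rw [div_pow]; ring
              rw [h3, le_div_iff₀ (by positivity)]
              calc a (i + 1) * β₆ ^ m = β₆ ^ m * a (i + 1) := by ring
                _ ≤ a j := hch
                _ ≤ Λ c (6 ^ j * ρ) := haj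
                _ ≤ Cl * t ^ (m + 1) * Λ c (6 ^ i * ρ) := hΛj
            rw [← div_eq_inv_mul, div_le_iff₀ (hΛb i)]
            linarith [hkey]
    · -- i = j
      subst heq
      have hSi : S i = ball c (2 * (6 ^ i * ρ)) \ ball c (6 ^ i * ρ) := by
        simp [hS_def]
      have hbndi : bnd i = Cl := by simp [hbnd_def]
      have hpt : ∀ x ∈ S i, g x ≤ ENNReal.ofReal ((Λ c (6 ^ i * ρ))⁻¹) := by
        intro x hx
        rw [hSi] at hx
        have hdist : 6 ^ i * ρ ≤ dist x c := by
          by_contra h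
          exact hx.2 (mem_ball.2 (by push_neg at h; linarith))
        have hΛle : Λ c (6 ^ i * ρ) ≤ Λ c (dist x c) := hΛmono c _ _ (by positivity) hdist
        exact ENNReal.ofReal_le_ofReal (inv_anti₀ (hΛb i) hΛle)
      have hdbl : Λ c (2 * (6 ^ i * ρ)) ≤ Cl * Λ c (6 ^ i * ρ) := by
        have := hΛdouble c (2 * (6 ^ i * ρ)) (by positivity)
        rwa [show 2 * (6 ^ i * ρ) / 2 = 6 ^ i * ρ from by ring] at this
      calc ∫⁻ x in S i, g x ∂μ
          ≤ ∫⁻ _ in S i, ENNReal.ofReal ((Λ c (6 ^ i * ρ))⁻¹) ∂μ :=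
            lintegral_mono_ae (ae_restrict_of_forall_mem (hSmeas i) hpt)
        _ = ENNReal.ofReal ((Λ c (6 ^ i * ρ))⁻¹) * μ (S i) := setLIntegral_const _ _
        _ ≤ ENNReal.ofReal ((Λ c (6 ^ i * ρ))⁻¹) * μ (ball c (2 * (6 ^ i * ρ))) := by
            refine mul_le_mul_right (measure_mono ?_) _
            rw [hSi]; exact Set.diff_subset
        _ ≤ ENNReal.ofReal ((Λ c (6 ^ i * ρ))⁻¹) * ENNReal.ofReal (Cl * Λ c (6 ^ i * ρ)) := by
            refine mul_le_mul_right ((hΛdom c _ (by positivity)).trans ?_) _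
            exact ENNReal.ofReal_le_ofReal hdbl
        _ = ENNReal.ofReal ((Λ c (6 ^ i * ρ))⁻¹ * (Cl * Λ c (6 ^ i * ρ))) :=
            (ENNReal.ofReal_mul (inv_nonneg.2 (hΛb i).le)).symm
        _ = ENNReal.ofReal (bnd i) := by
            rw [hbndi]
            congr 1
            rw [mul_comm Cl, ← mul_assoc, inv_mul_cancel₀ (hΛb i).ne', one_mul]
    · -- i > j
      have hSi : S i = ∅ := by
        simp only [hS_def, if_neg (by omega : ¬ i < j), if_neg (by omega : ¬ i = j)]
      rw [hSi]
      simp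
  have hsum : ∑ i ∈ Finset.range (j + 1), bnd i ≤ Cl + Cl * t * β₆ / (β₆ - t) := by
    rw [Finset.sum_range_succ]
    have hbj : bnd j = Cl := by simp [hbnd_def]
    have hq0 : (0:ℝ) ≤ t / β₆ := by positivity
    have hq1 : t / β₆ < 1 := (div_lt_one hβ0).2 (by linarith [hβ₆])
    have hsum2 : ∑ i ∈ Finset.range j, bnd i
        = ∑ i ∈ Finset.range j, Cl * t * (t / β₆) ^ (j - 1 - i) := by
      refine Finset.sum_congr rfl fun i hi => ?_
      have : i < j := Finset.mem_range.1 hi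
      simp only [hbnd_def, if_pos this]
    have hrefl := Finset.sum_range_reflect (fun n => Cl * t * (t / β₆) ^ n) j
    have hgeom : ∑ i ∈ Finset.range j, (t / β₆) ^ i ≤ (1 - t / β₆)⁻¹ :=
      aux_geom_sum hq0 hq1 j
    have hval : (1 - t / β₆)⁻¹ = β₆ / (β₆ - t) := by
      rw [show (1 : ℝ) - t / β₆ = (β₆ - t) / β₆ from by field_simp]
      rw [inv_div]
    have : ∑ i ∈ Finset.range j, bnd i ≤ Cl * t * β₆ / (β₆ - t) := by
      rw [hsum2]
      calc ∑ i ∈ Finset.range j, Cl * t * (t / β₆) ^ (j - 1 - i)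
          = ∑ i ∈ Finset.range j, Cl * t * (t / β₆) ^ i := hrefl
        _ = Cl * t * ∑ i ∈ Finset.range j, (t / β₆) ^ i := by rw [Finset.mul_sum]
        _ ≤ Cl * t * (1 - t / β₆)⁻¹ :=
            mul_le_mul_of_nonneg_left hgeom (by positivity)
        _ = Cl * t * β₆ / (β₆ - t) := by rw [hval]; ring
    rw [hbj]
    linarith
  have hL : ∫⁻ x in ball c (2 * (6 ^ j * ρ)) \ ball c ρ, g x ∂μ
      ≤ ENNReal.ofReal (Cl + Cl * t * β₆ / (β₆ - t)) := by
    calc ∫⁻ x in ball c (2 * (6 ^ j * ρ)) \ ball c ρ, g x ∂μ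
        ≤ ∫⁻ x in ⋃ i, S i, g x ∂μ := lintegral_mono_set hcover
      _ ≤ ∑' i, ∫⁻ x in S i, g x ∂μ := lintegral_iUnion_le _ _
      _ ≤ ∑' i, ENNReal.ofReal (bnd i) := ENNReal.tsum_le_tsum hterm
      _ = ∑ i ∈ Finset.range (j + 1), ENNReal.ofReal (bnd i) := by
          refine tsum_eq_sum fun i hi => ?_
          have hij : ¬ i < j ∧ i ≠ j := by
            constructor <;> [skip; skip] <;> 
            · have := Finset.mem_range.not.1 hi
              omega
          simp [hbnd_def, hij.1, hij.2]
      _ = ENNReal.ofReal (∑ i ∈ Finset.range (j + 1), bnd i) :=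
          (ENNReal.ofReal_sum_of_nonneg fun i _ => hbnd0 i).symm
      _ ≤ ENNReal.ofReal (Cl + Cl * t * β₆ / (β₆ - t)) := ENNReal.ofReal_le_ofReal hsum
  rw [delta]
  exact ENNReal.toReal_le_of_le_ofReal hA0 hL


end deltabd


set_option maxHeartbeats 1000000 in
/-- (Lemma 3.1) For `r ∈ (0,1)` and `f ∈ RBMO(μ)`, the maximal function
`M♯_r(f) = [M♯(|f|^r)]^{1/r}` is in `L^∞(μ)` with `‖M♯_r f‖_∞ ≤ C ‖f‖_{RBMO}`. -/
theorem msharp_r_bounded_of_rbmo {X : Type*} [MetricSpace X] [MeasurableSpace X]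
    [BorelSpace X] (μ : Measure X) (Λ : X → ℝ → ℝ) (Cl β₆ : ℝ) (N₀ : ℕ)
    (hΛpos : ∀ (x : X) (r : ℝ), 0 < r → 0 < Λ x r)
    (hΛmono : ∀ (x : X) (r s : ℝ), 0 < r → r ≤ s → Λ x r ≤ Λ x s)
    (hΛdom : ∀ (x : X) (r : ℝ), 0 < r → μ (ball x r) ≤ ENNReal.ofReal (Λ x r))
    (hΛdouble : ∀ (x : X) (r : ℝ), 0 < r → Λ x r ≤ Cl * Λ x (r / 2))
    (hgd : ∀ (x : X) (r : ℝ), ∃ s : Finset X,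
      s.card ≤ N₀ ∧ ball x r ⊆ ⋃ y ∈ s, ball y (r / 2))
    (hball : ∀ (x : X) (r : ℝ), 0 < r → 0 < μ (ball x r) ∧ μ (ball x r) < ⊤)
    (hβ₆ : Cl ^ Real.logb 2 6 < β₆)
    (r : ℝ) (hr : r ∈ Set.Ioo (0 : ℝ) 1) :
    ∃ C : ℝ, 0 < C ∧ ∀ (f : X → ℝ) (fB : X → ℝ → ℝ) (K : ℝ), 0 ≤ K →
      (∀ (c : X) (ρ : ℝ), 0 < ρ → IntegrableOn f (ball c ρ) μ) →
      (∀ (c : X) (ρ : ℝ), 0 < ρ →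
        ∫ x in ball c ρ, |f x - fB c ρ| ∂μ ≤ K * (μ (ball c (2 * ρ))).toReal) →
      (∀ (c c' : X) (ρ ρ' : ℝ), 0 < ρ → 0 < ρ' → ball c ρ ⊆ ball c' ρ' →
        |fB c ρ - fB c' ρ'| ≤ K * (1 + delta μ Λ c ρ c' ρ')) →
      ∀ x : X, (msharp μ Λ β₆ (fun y => |f y| ^ r) x) ^ (1 / r) ≤ ENNReal.ofReal (C * K) := by
  obtain ⟨hr0, hr1⟩ := hr
  have hr1' : r ≤ 1 := hr1.le
  set t : ℝ := Cl ^ Real.logb 2 6 with ht_def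
  set A : ℝ := Cl + Cl * t * β₆ / (β₆ - t) with hA_def
  set D : ℝ := 3 + A + 3 * β₆ with hD_def
  refine ⟨max 1 (D ^ (1 / r)), lt_of_lt_of_le one_pos (le_max_left _ _), ?_⟩
  intro f fB K hK hint hK1 hK2 x
  -- basic constants
  have hCl1 : 1 ≤ Cl := by
    have h1 := hΛdouble x 1 one_pos
    have h2 := hΛmono x (1/2) 1 (by norm_num) (by norm_num)
    have h3 := hΛpos x (1/2) (by norm_num)
    nlinarith
  have hCl0 : (0:ℝ) < Cl := lt_of_lt_of_le one_pos hCl1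
  have ht1 : (1:ℝ) ≤ t := Real.one_le_rpow hCl1
    (Real.logb_nonneg (by norm_num) (by norm_num))
  have ht0 : (0:ℝ) < t := lt_of_lt_of_le one_pos ht1
  have hβ1 : (1:ℝ) ≤ β₆ := le_of_lt (lt_of_le_of_lt ht1 hβ₆)
  have hβ0 : (0:ℝ) < β₆ := lt_of_lt_of_le one_pos hβ1
  have hβt : (0:ℝ) < β₆ - t := by linarith [hβ₆]
  have hA0 : (0:ℝ) ≤ A := by rw [hA_def]; positivity
  have hD1 : (1:ℝ) ≤ D := by rw [hD_def]; nlinarith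
  have hD0 : (0:ℝ) < D := lt_of_lt_of_le one_pos hD1
  have hKr0 : (0:ℝ) ≤ K ^ r := Real.rpow_nonneg hK r
  -- the shared doubling-ball estimate
  have hdoub : ∀ (c0 : X) (ρ0 : ℝ), 0 < ρ0 →
      μ (ball c0 (6 * ρ0)) ≤ ENNReal.ofReal β₆ * μ (ball c0 ρ0) →
      |(⨍ z in ball c0 ρ0, |f z| ^ r ∂μ) - |fB c0 ρ0| ^ r| ≤ K ^ r * β₆ := by
    intro c0 ρ0 hρ0 hdb
    have h0 := hball c0 ρ0 hρ0
    have hu0 : 0 < (μ (ball c0 ρ0)).toReal := ENNReal.toReal_pos h0.1.ne' h0.2.ne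
    have hdev := aux_avg_dev h0.1.ne' h0.2.ne (hint c0 ρ0 hρ0) (fB c0 ρ0) hr0 hr1'
    have havg0 : 0 ≤ ⨍ z in ball c0 ρ0, |f z - fB c0 ρ0| ∂μ := by
      rw [setAverage_eq, smul_eq_mul]
      exact mul_nonneg (inv_nonneg.2 ENNReal.toReal_nonneg)
        (integral_nonneg fun z => abs_nonneg _)
    have hμ2 : (μ (ball c0 (2 * ρ0))).toReal ≤ β₆ * (μ (ball c0 ρ0)).toReal := by
      have hm : μ (ball c0 (2 * ρ0)) ≤ μ (ball c0 (6 * ρ0)) :=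
        measure_mono (ball_subset_ball (by linarith))
      have h2 := ENNReal.toReal_mono
        (ENNReal.mul_ne_top ENNReal.ofReal_ne_top h0.2.ne) (hm.trans hdb)
      rwa [ENNReal.toReal_mul, ENNReal.toReal_ofReal hβ0.le] at h2
    have havg : ⨍ z in ball c0 ρ0, |f z - fB c0 ρ0| ∂μ ≤ K * β₆ := by
      rw [setAverage_eq, smul_eq_mul, Measure.real, ← div_eq_inv_mul, div_le_iff₀ hu0]
      calc ∫ z in ball c0 ρ0, |f z - fB c0 ρ0| ∂μ
          ≤ K * (μ (ball c0 (2 * ρ0))).toReal := hK1 c0 ρ0 hρ0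
        _ ≤ K * (β₆ * (μ (ball c0 ρ0)).toReal) := mul_le_mul_of_nonneg_left hμ2 hK
        _ = K * β₆ * (μ (ball c0 ρ0)).toReal := by ring
    calc |(⨍ z in ball c0 ρ0, |f z| ^ r ∂μ) - |fB c0 ρ0| ^ r|
        ≤ (⨍ z in ball c0 ρ0, |f z - fB c0 ρ0| ∂μ) ^ r := hdev
      _ ≤ (K * β₆) ^ r := Real.rpow_le_rpow havg0 havg hr0.le
      _ = K ^ r * β₆ ^ r := Real.mul_rpow hK hβ0.le
      _ ≤ K ^ r * β₆ := by
          refine mul_le_mul_of_nonneg_left ?_ hKr0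
          calc β₆ ^ r ≤ β₆ ^ (1:ℝ) := Real.rpow_le_rpow_of_exponent_le hβ1 hr1'
            _ = β₆ := Real.rpow_one β₆
  -- main bound on msharp
  suffices hM : msharp μ Λ β₆ (fun y => |f y| ^ r) x ≤ ENNReal.ofReal (D * K ^ r) by
    have h1 : (msharp μ Λ β₆ (fun y => |f y| ^ r) x) ^ (1/r)
        ≤ (ENNReal.ofReal (D * K ^ r)) ^ (1/r) :=
      ENNReal.rpow_le_rpow hM (by positivity)
    have h2 : (ENNReal.ofReal (D * K ^ r)) ^ (1/r) = ENNReal.ofReal ((D * K ^ r) ^ (1/r)) :=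
      ENNReal.ofReal_rpow_of_nonneg (by positivity) (by positivity)
    have h3 : (D * K ^ r) ^ (1/r) = D ^ (1/r) * K := by
      rw [Real.mul_rpow hD0.le hKr0, ← Real.rpow_mul hK, mul_one_div, div_self hr0.ne',
        Real.rpow_one]
    refine le_trans h1 ?_
    rw [h2, h3]
    exact ENNReal.ofReal_le_ofReal
      (mul_le_mul_of_nonneg_right (le_max_right 1 (D ^ (1/r))) hK)
  rw [msharp]
  apply sup_le
  · -- first part of the sharp maximal function
    refine iSup_le fun c => iSup_le fun ρ => iSup_le fun hcond => ?_
    obtain ⟨hρ, hxball⟩ := hcond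
    beta_reduce
    set j := tilde6 μ β₆ c ρ with hj_def
    have hex := aux_exists_doubling hΛpos hΛmono hΛdom hΛdouble hball hCl1 hβ₆ c hρ
    have hjeq : j = Nat.find hex := by rw [hj_def, tilde6, dif_pos hex]
    have hmin : ∀ i < j, ¬ μ (ball c (6 ^ (i+1) * ρ)) ≤
        ENNReal.ofReal β₆ * μ (ball c (6 ^ i * ρ)) := by
      intro i hi
      rw [hjeq] at hi
      exact Nat.find_min hex hi
    have hspec : μ (ball c (6 ^ (j+1) * ρ)) ≤ ENNReal.ofReal β₆ * μ (ball c (6 ^ j * ρ)) := by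
      rw [hjeq]; exact Nat.find_spec hex
    have hdelta : delta μ Λ c ρ c (6 ^ j * ρ) ≤ A :=
      aux_delta_le hΛpos hΛmono hΛdom hΛdouble hball hCl1 hβ₆ c hρ hmin
    have hρ6 : (0:ℝ) < 6 ^ j * ρ := by positivity
    have h6j : (1:ℝ) ≤ 6 ^ j := one_le_pow₀ (by norm_num)
    have hsub : ball c ρ ⊆ ball c (6 ^ j * ρ) := ball_subset_ball (by nlinarith)
    have hB := hball c ρ hρ
    have hBt := hball c (6 ^ j * ρ) hρ6
    have hB5 := hball c (5 * ρ) (by linarith)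
    have hB2 := hball c (2 * ρ) (by linarith)
    set u : ℝ := (μ (ball c ρ)).toReal with hu_def
    set v : ℝ := (μ (ball c (2 * ρ))).toReal with hv_def
    set w : ℝ := (μ (ball c (5 * ρ))).toReal with hw_def
    have hu0 : 0 < u := ENNReal.toReal_pos hB.1.ne' hB.2.ne
    have hv0 : 0 < v := ENNReal.toReal_pos hB2.1.ne' hB2.2.ne
    have hw0 : 0 < w := ENNReal.toReal_pos hB5.1.ne' hB5.2.ne
    have hvw : v ≤ w := ENNReal.toReal_mono hB5.2.ne
      (measure_mono (ball_subset_ball (by linarith)))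
    have huw : u ≤ w := ENNReal.toReal_mono hB5.2.ne
      (measure_mono (ball_subset_ball (by linarith)))
    set a1 : ℝ := fB c ρ with ha1_def
    set a2 : ℝ := fB c (6 ^ j * ρ) with ha2_def
    set mt : ℝ := ⨍ z in ball c (6 ^ j * ρ), |f z| ^ r ∂μ with hmt_def
    -- integrability facts on B
    have hfi : IntegrableOn f (ball c ρ) μ := hint c ρ hρ
    have hconst1 : IntegrableOn (fun _ : X => a1) (ball c ρ) μ :=
      integrableOn_const hB.2.ne
    have hfa : IntegrableOn (fun z => |f z - a1|) (ball c ρ) μ := (hfi.sub hconst1).abs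
    have hi1 : IntegrableOn (fun y => |f y| ^ r) (ball c ρ) μ :=
      aux_rpow_integrable hB.2.ne (fun _ => abs_nonneg _) hfi.abs hr0 hr1'
    have hia : IntegrableOn (fun y => |f y - a1| ^ r) (ball c ρ) μ :=
      aux_rpow_integrable hB.2.ne (fun _ => abs_nonneg _) hfa hr0 hr1'
    have hconstmt : IntegrableOn (fun _ : X => mt) (ball c ρ) μ :=
      integrableOn_const hB.2.ne
    have hconstE : IntegrableOn (fun _ : X => |(|a1| ^ r) - mt|) (ball c ρ) μ :=
      integrableOn_const hB.2.ne
    -- E2 bound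
    have hA2 : |mt - |a2| ^ r| ≤ K ^ r * β₆ := by
      refine hdoub c (6 ^ j * ρ) hρ6 ?_
      have heq : (6:ℝ) * (6 ^ j * ρ) = 6 ^ (j+1) * ρ := by ring
      rw [heq]
      exact hspec
    have hδ0 : 0 ≤ delta μ Λ c ρ c (6 ^ j * ρ) := by
      unfold delta; exact ENNReal.toReal_nonneg
    have hA1 : |(|a1| ^ r) - |a2| ^ r| ≤ K ^ r * (1 + A) := by
      have h := hK2 c c ρ (6 ^ j * ρ) hρ hρ6 hsub
      calc |(|a1| ^ r) - |a2| ^ r| ≤ |a1 - a2| ^ r := aux_abs_rpow_sub hr0 hr1' a1 a2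
        _ ≤ (K * (1 + delta μ Λ c ρ c (6 ^ j * ρ))) ^ r :=
            Real.rpow_le_rpow (abs_nonneg _) h hr0.le
        _ = K ^ r * (1 + delta μ Λ c ρ c (6 ^ j * ρ)) ^ r :=
            Real.mul_rpow hK (by linarith)
        _ ≤ K ^ r * (1 + delta μ Λ c ρ c (6 ^ j * ρ)) := by
            refine mul_le_mul_of_nonneg_left ?_ hKr0
            calc (1 + delta μ Λ c ρ c (6 ^ j * ρ)) ^ r
                ≤ (1 + delta μ Λ c ρ c (6 ^ j * ρ)) ^ (1:ℝ) :=
                  Real.rpow_le_rpow_of_exponent_le (by linarith) hr1'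
              _ = _ := Real.rpow_one _
        _ ≤ K ^ r * (1 + A) := mul_le_mul_of_nonneg_left (by linarith) hKr0
    have hE2 : |(|a1| ^ r) - mt| ≤ K ^ r * (1 + A) + K ^ r * β₆ := by
      calc |(|a1| ^ r) - mt| ≤ |(|a1| ^ r) - |a2| ^ r| + |(|a2| ^ r) - mt| :=
            abs_sub_le _ _ _
        _ ≤ K ^ r * (1 + A) + K ^ r * β₆ := by
            refine add_le_add hA1 ?_
            rw [abs_sub_comm]
            exact hA2
    -- E1 bound
    have havg0 : 0 ≤ ⨍ z in ball c ρ, |f z - a1| ∂μ := by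
      rw [setAverage_eq, smul_eq_mul]
      exact mul_nonneg (inv_nonneg.2 ENNReal.toReal_nonneg)
        (integral_nonneg fun z => abs_nonneg _)
    have havg : ⨍ z in ball c ρ, |f z - a1| ∂μ ≤ K * v / u := by
      rw [setAverage_eq, smul_eq_mul, Measure.real, ← div_eq_inv_mul]
      gcongr
      exact hK1 c ρ hρ
    have hjen : ⨍ z in ball c ρ, |f z - a1| ^ r ∂μ ≤ (⨍ z in ball c ρ, |f z - a1| ∂μ) ^ r :=
      aux_jensen hB.1.ne' hB.2.ne (fun _ => abs_nonneg _) hfa hr0 hr1'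
    have hE1 : ∫ z in ball c ρ, |f z - a1| ^ r ∂μ ≤ K ^ r * w := by
      have h0 : ∫ z in ball c ρ, |f z - a1| ^ r ∂μ
          = u * ⨍ z in ball c ρ, |f z - a1| ^ r ∂μ := by
        rw [setAverage_eq, smul_eq_mul, Measure.real, ← mul_assoc, mul_inv_cancel₀ hu0.ne', one_mul]
      have e1 : (K * v / u) ^ r = K ^ r * v ^ r / u ^ r := by
        rw [Real.div_rpow (by positivity) hu0.le, Real.mul_rpow hK hv0.le]
      have e2 : u ^ ((1:ℝ) - r) = u / u ^ r := by
        rw [Real.rpow_sub hu0, Real.rpow_one]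
      have e3 : u * (K ^ r * v ^ r / u ^ r) = K ^ r * (v ^ r * u ^ ((1:ℝ) - r)) := by
        rw [e2]; field_simp
      have e4 : v ^ r ≤ w ^ r := Real.rpow_le_rpow hv0.le hvw hr0.le
      have e5 : u ^ ((1:ℝ) - r) ≤ w ^ ((1:ℝ) - r) :=
        Real.rpow_le_rpow hu0.le huw (by linarith)
      have e6 : w ^ r * w ^ ((1:ℝ) - r) = w := by
        rw [← Real.rpow_add hw0]; norm_num
      calc ∫ z in ball c ρ, |f z - a1| ^ r ∂μ
          = u * ⨍ z in ball c ρ, |f z - a1| ^ r ∂μ := h0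
        _ ≤ u * (⨍ z in ball c ρ, |f z - a1| ∂μ) ^ r :=
            mul_le_mul_of_nonneg_left hjen hu0.le
        _ ≤ u * (K * v / u) ^ r := by
            refine mul_le_mul_of_nonneg_left ?_ hu0.le
            exact Real.rpow_le_rpow havg0 havg hr0.le
        _ = K ^ r * (v ^ r * u ^ ((1:ℝ) - r)) := by rw [e1]; exact e3
        _ ≤ K ^ r * (w ^ r * w ^ ((1:ℝ) - r)) := by
            refine mul_le_mul_of_nonneg_left ?_ hKr0
            exact mul_le_mul e4 e5 (Real.rpow_nonneg hu0.le _) (Real.rpow_nonneg hw0.le _)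
        _ = K ^ r * w := by rw [e6]
    -- assemble part 1
    refine ENNReal.ofReal_le_ofReal ?_
    rw [div_le_iff₀ hw0]
    have hptw : ∀ y, |(|f y| ^ r) - mt| ≤ |f y - a1| ^ r + |(|a1| ^ r) - mt| := fun y => by
      calc |(|f y| ^ r) - mt| ≤ |(|f y| ^ r) - |a1| ^ r| + |(|a1| ^ r) - mt| := abs_sub_le _ _ _
        _ ≤ |f y - a1| ^ r + |(|a1| ^ r) - mt| :=
            add_le_add_left (aux_abs_rpow_sub hr0 hr1' (f y) a1) _
    calc ∫ y in ball c ρ, |(|f y| ^ r) - mt| ∂μ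
        ≤ ∫ y in ball c ρ, (|f y - a1| ^ r + |(|a1| ^ r) - mt|) ∂μ := by
          refine integral_mono (hi1.sub hconstmt).abs (hia.add hconstE) hptw
      _ = (∫ y in ball c ρ, |f y - a1| ^ r ∂μ) + u * |(|a1| ^ r) - mt| := by
          rw [integral_add hia hconstE, setIntegral_const, smul_eq_mul, Measure.real]
      _ ≤ K ^ r * w + u * (K ^ r * (1 + A) + K ^ r * β₆) := by
          refine add_le_add hE1 (mul_le_mul_of_nonneg_left hE2 hu0.le)
      _ ≤ K ^ r * w + w * (K ^ r * (1 + A) + K ^ r * β₆) := by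
          refine add_le_add_right (mul_le_mul_of_nonneg_right huw (by positivity)) _
      _ = (K ^ r * w) * (2 + A + β₆) := by ring
      _ ≤ (K ^ r * w) * D := by
          refine mul_le_mul_of_nonneg_left ?_ (mul_nonneg hKr0 hw0.le)
          rw [hD_def]; linarith
      _ = D * K ^ r * w := by ring
  · -- second part of the sharp maximal function
    refine iSup_le fun cB => iSup_le fun rB => iSup_le fun cS => iSup_le fun rS =>
      iSup_le fun hcond => ?_
    obtain ⟨hrB, hrS, hxB, hBS, hdB, hdS⟩ := hcond
    beta_reduce
    have hδ0 : 0 ≤ delta μ Λ cB rB cS rS := by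
      unfold delta; exact ENNReal.toReal_nonneg
    refine ENNReal.ofReal_le_ofReal ?_
    rw [div_le_iff₀ (by linarith : (0:ℝ) < 1 + delta μ Λ cB rB cS rS)]
    have h1 := hdoub cB rB hrB hdB
    have h2 := hdoub cS rS hrS hdS
    have h3 : |(|fB cB rB| ^ r) - |fB cS rS| ^ r|
        ≤ K ^ r * (1 + delta μ Λ cB rB cS rS) := by
      have h := hK2 cB cS rB rS hrB hrS hBS
      calc |(|fB cB rB| ^ r) - |fB cS rS| ^ r| ≤ |fB cB rB - fB cS rS| ^ r :=
            aux_abs_rpow_sub hr0 hr1' _ _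
        _ ≤ (K * (1 + delta μ Λ cB rB cS rS)) ^ r :=
            Real.rpow_le_rpow (abs_nonneg _) h hr0.le
        _ = K ^ r * (1 + delta μ Λ cB rB cS rS) ^ r := Real.mul_rpow hK (by linarith)
        _ ≤ K ^ r * (1 + delta μ Λ cB rB cS rS) := by
            refine mul_le_mul_of_nonneg_left ?_ hKr0
            calc (1 + delta μ Λ cB rB cS rS) ^ r
                ≤ (1 + delta μ Λ cB rB cS rS) ^ (1:ℝ) :=
                  Real.rpow_le_rpow_of_exponent_le (by linarith) hr1'
              _ = _ := Real.rpow_one _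
    have htri : |(⨍ z in ball cB rB, |f z| ^ r ∂μ) - ⨍ z in ball cS rS, |f z| ^ r ∂μ|
        ≤ K ^ r * β₆ + K ^ r * (1 + delta μ Λ cB rB cS rS) + K ^ r * β₆ := by
      calc |(⨍ z in ball cB rB, |f z| ^ r ∂μ) - ⨍ z in ball cS rS, |f z| ^ r ∂μ|
          ≤ |(⨍ z in ball cB rB, |f z| ^ r ∂μ) - |fB cB rB| ^ r|
            + |(|fB cB rB| ^ r) - ⨍ z in ball cS rS, |f z| ^ r ∂μ| := abs_sub_le _ _ _
        _ ≤ |(⨍ z in ball cB rB, |f z| ^ r ∂μ) - |fB cB rB| ^ r|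
            + (|(|fB cB rB| ^ r) - |fB cS rS| ^ r|
              + |(|fB cS rS| ^ r) - ⨍ z in ball cS rS, |f z| ^ r ∂μ|) :=
            add_le_add_right (abs_sub_le _ _ _) _
        _ ≤ K ^ r * β₆ + (K ^ r * (1 + delta μ Λ cB rB cS rS) + K ^ r * β₆) := by
            refine add_le_add h1 (add_le_add h3 ?_)
            rw [abs_sub_comm]
            exact h2
        _ = _ := by ring
    calc |(⨍ z in ball cB rB, |f z| ^ r ∂μ) - ⨍ z in ball cS rS, |f z| ^ r ∂μ|
        ≤ K ^ r * β₆ + K ^ r * (1 + delta μ Λ cB rB cS rS) + K ^ r * β₆ := htri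
      _ = K ^ r * (2 * β₆ + (1 + delta μ Λ cB rB cS rS)) := by ring
      _ ≤ D * K ^ r * (1 + delta μ Λ cB rB cS rS) := by
          have hstep2 : 2 * β₆ + (1 + delta μ Λ cB rB cS rS)
              ≤ D * (1 + delta μ Λ cB rB cS rS) := by
            rw [hD_def]
            nlinarith [mul_nonneg hA0 hδ0, mul_nonneg hβ0.le hδ0]
          calc K ^ r * (2 * β₆ + (1 + delta μ Λ cB rB cS rS))
              ≤ K ^ r * (D * (1 + delta μ Λ cB rB cS rS)) :=
                mul_le_mul_of_nonneg_left hstep2 hKr0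
            _ = D * K ^ r * (1 + delta μ Λ cB rB cS rS) := by ring
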